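/- Let p ≥ 1 and let G be an ordered graph with chromatic number at least k ≥ 2, where edges (u1,v1), (u2,v2) are conflicting if |(v1-u1) - (v2-u2)| ≥ p (their lengths differ by at least p). Then G contains ⌈(k-1)/p⌉ pairwise conflicting edges, i.e., ⌈(k-1)/p⌉ edges whose lengths pairwise differ by at least p. Moreover, for the complete graph on vertex set {1,...,k}, the maximum number of such pairwise conflicting edges is exactly ⌈(k-1)/p⌉. -/

import Mathlib

/-- Greedy coloring lemma: if all edges lie in a finset `V` and every vertex has at most `s`
left-neighbors, then `G` is `(s+1)`-colorable. -/
lemma lemA (s : ℕ) : ∀ (n : ℕ) (G : SimpleGraph ℤ) (V : Finset ℤ), V.card ≤ n →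
    (∀ u v : ℤ, G.Adj u v → u ∈ V ∧ v ∈ V) →
    (∀ (v : ℤ) (W : Finset ℤ), (∀ u ∈ W, u ∈ V ∧ u < v ∧ G.Adj u v) → W.card ≤ s) →
    G.Colorable (s + 1) := by
  intro n
  induction n with
  | zero =>
    intro G V hcard hsupp _
    have hV : V = ∅ := Finset.card_eq_zero.mp (Nat.le_zero.mp hcard)
    exact ⟨SimpleGraph.Coloring.mk (fun _ => (0 : Fin (s+1)))
      (fun {a b} hab => absurd ((hsupp a b hab).1) (by simp [hV]))⟩
  | succ n ih =>
    intro G V hcard hsupp hdeg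
    classical
    rcases V.eq_empty_or_nonempty with hV | hV
    · exact ⟨SimpleGraph.Coloring.mk (fun _ => (0 : Fin (s+1)))
        (fun {a b} hab => absurd ((hsupp a b hab).1) (by simp [hV]))⟩
    set v := V.max' hV with hvdef
    set G' : SimpleGraph ℤ :=
      { Adj := fun a b => G.Adj a b ∧ a ≠ v ∧ b ≠ v
        symm := by constructor; intro a b h; exact ⟨h.1.symm, h.2.2, h.2.1⟩
        loopless := by constructor; intro a h; exact G.loopless.irrefl a h.1 } with hG'
    have hadj' : ∀ a b : ℤ, G'.Adj a b ↔ G.Adj a b ∧ a ≠ v ∧ b ≠ v := fun a b => Iff.rfl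
    have hsupp' : ∀ u w : ℤ, G'.Adj u w → u ∈ V.erase v ∧ w ∈ V.erase v := by
      intro u w h
      exact ⟨Finset.mem_erase.mpr ⟨h.2.1, (hsupp u w h.1).1⟩,
             Finset.mem_erase.mpr ⟨h.2.2, (hsupp u w h.1).2⟩⟩
    have hdeg' : ∀ (w : ℤ) (W : Finset ℤ),
        (∀ u ∈ W, u ∈ V.erase v ∧ u < w ∧ G'.Adj u w) → W.card ≤ s := by
      intro w W hW
      exact hdeg w W (fun u hu =>
        ⟨Finset.mem_of_mem_erase (hW u hu).1, (hW u hu).2.1, (hW u hu).2.2.1⟩)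
    have hcard' : (V.erase v).card ≤ n := by
      have h1 := Finset.card_erase_of_mem (show v ∈ V from V.max'_mem hV)
      have h2 : 1 ≤ V.card := Finset.card_pos.mpr hV
      omega
    obtain ⟨C'⟩ := ih G' (V.erase v) hcard' hsupp' hdeg'
    set N := V.filter (fun u => u < v ∧ G.Adj u v) with hN
    have hNs : N.card ≤ s := hdeg v N (by
      intro u hu
      have := Finset.mem_filter.mp hu
      exact ⟨this.1, this.2.1, this.2.2⟩)
    have himg : (N.image (fun u => C' u)).card ≤ s :=
      le_trans Finset.card_image_le hNs
    have hex : ∃ c : Fin (s+1), c ∉ N.image (fun u => C' u) := by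
      by_contra h
      push_neg at h
      have hsub : (Finset.univ : Finset (Fin (s+1))) ⊆ N.image (fun u => C' u) :=
        fun c _ => h c
      have := Finset.card_le_card hsub
      simp only [Finset.card_univ, Fintype.card_fin] at this
      omega
    obtain ⟨c, hc⟩ := hex
    refine ⟨SimpleGraph.Coloring.mk (fun x => if x = v then c else C' x) ?_⟩
    intro a b hab heq
    by_cases ha : a = v
    · by_cases hb : b = v
      · rw [ha, hb] at hab; exact G.loopless.irrefl v hab
      · have hbV := (hsupp a b hab).2
        have hbv : b < v := lt_of_le_of_ne (Finset.le_max' V b hbV) hb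
        have hbadj : G.Adj b v := by rw [← ha]; exact hab.symm
        have hbN : b ∈ N := Finset.mem_filter.mpr ⟨hbV, hbv, hbadj⟩
        simp only [if_pos ha, if_neg hb] at heq
        exact hc (Finset.mem_image.mpr ⟨b, hbN, heq.symm⟩)
    · by_cases hb : b = v
      · have haV := (hsupp a b hab).1
        have hav : a < v := lt_of_le_of_ne (Finset.le_max' V a haV) ha
        have haadj : G.Adj a v := by rw [← hb]; exact hab
        have haN : a ∈ N := Finset.mem_filter.mpr ⟨haV, hav, haadj⟩
        simp only [if_pos hb, if_neg ha] at heq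
        exact hc (Finset.mem_image.mpr ⟨a, haN, heq⟩)
      · have : G'.Adj a b := ⟨hab, ha, hb⟩
        simp only [if_neg ha, if_neg hb] at heq
        exact C'.valid this heq

/-- Greedy selection of a `p`-separated subset covering `D` by intervals of length `p`. -/
lemma lemB (p : ℕ) (hp : 1 ≤ p) : ∀ (n : ℕ) (D : Finset ℤ), D.card ≤ n →
    ∃ T : Finset ℤ, T ⊆ D ∧ (∀ a ∈ T, ∀ b ∈ T, a ≠ b → (p : ℤ) ≤ |a - b|) ∧
      ∀ d ∈ D, ∃ a ∈ T, a ≤ d ∧ d < a + p := by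
  intro n
  induction n with
  | zero =>
    intro D hD
    have : D = ∅ := Finset.card_eq_zero.mp (Nat.le_zero.mp hD)
    subst this
    exact ⟨∅, Finset.Subset.refl _, by simp, by simp⟩
  | succ n ih =>
    intro D hD
    classical
    rcases D.eq_empty_or_nonempty with h | h
    · subst h; exact ⟨∅, Finset.Subset.refl _, by simp, by simp⟩
    set a := D.min' h with ha
    set D' := D.filter (fun d => a + p ≤ d) with hD'
    have haD : a ∈ D := D.min'_mem h
    have haD' : a ∉ D' := by
      intro hmem
      have := (Finset.mem_filter.mp hmem).2
      have hp' : (0 : ℤ) < p := by exact_mod_cast hp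
      omega
    have hcard' : D'.card ≤ n := by
      have hsub : D' ⊆ D.erase a := fun x hx =>
        Finset.mem_erase.mpr ⟨by rintro rfl; exact haD' hx, (Finset.mem_filter.mp hx).1⟩
      have h1 := Finset.card_le_card hsub
      have h2 := Finset.card_erase_of_mem haD
      have h3 : 1 ≤ D.card := Finset.card_pos.mpr h
      omega
    obtain ⟨T', hT'sub, hT'sep, hT'cov⟩ := ih D' hcard'
    have hT'big : ∀ b ∈ T', a + p ≤ b := fun b hb => (Finset.mem_filter.mp (hT'sub hb)).2
    refine ⟨insert a T', ?_, ?_, ?_⟩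
    · intro x hx
      rcases Finset.mem_insert.mp hx with rfl | hx
      · exact haD
      · exact (Finset.mem_filter.mp (hT'sub hx)).1
    · intro x hx y hy hxy
      rcases Finset.mem_insert.mp hx with rfl | hx <;>
        rcases Finset.mem_insert.mp hy with rfl | hy
      · exact absurd rfl hxy
      · have := hT'big y hy; rw [abs_sub_comm]; rw [abs_of_nonneg (by omega)]; omega
      · have := hT'big x hx; rw [abs_of_nonneg (by omega)]; omega
      · exact hT'sep x hx y hy hxy
    · intro d hd
      by_cases hcase : a + p ≤ d
      · obtain ⟨b, hb, h1, h2⟩ := hT'cov d (Finset.mem_filter.mpr ⟨hd, hcase⟩)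
        exact ⟨b, Finset.mem_insert_of_mem hb, h1, h2⟩
      · exact ⟨a, Finset.mem_insert_self _ _, D.min'_le d hd, by omega⟩

lemma lemDiv (p : ℕ) (hp : 1 ≤ p) {x y q : ℤ} (_hx : 0 ≤ x) (_hy : 0 ≤ y)
    (h1 : x / p = q) (h2 : y / p = q) : |x - y| < p := by
  have hp0 : (0 : ℤ) < p := by exact_mod_cast hp
  have e1 := Int.mul_ediv_add_emod x p
  have e2 := Int.mul_ediv_add_emod y p
  have r1 := Int.emod_nonneg x (ne_of_gt hp0)
  have r2 := Int.emod_nonneg y (ne_of_gt hp0)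
  have s1 := Int.emod_lt_of_pos x hp0
  have s2 := Int.emod_lt_of_pos y hp0
  rw [h1] at e1; rw [h2] at e2
  rw [abs_lt]
  omega

lemma lemPart2 (p k : ℕ) (hp : 1 ≤ p) (hk : 2 ≤ k) (S : Finset (ℤ × ℤ))
    (hmem : ∀ e ∈ S, 1 ≤ e.1 ∧ e.1 < e.2 ∧ e.2 ≤ (k : ℤ))
    (hconf : ∀ e1 ∈ S, ∀ e2 ∈ S, e1 ≠ e2 →
      (p : ℤ) ≤ |(e1.2 - e1.1) - (e2.2 - e2.1)|) :
    S.card ≤ (k + p - 2) / p := by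
  have hp0 : (0 : ℤ) < p := by exact_mod_cast hp
  have key : S.card ≤ (k - 2) / p + 1 := by
    have := Finset.card_le_card_of_injOn
      (f := fun e : ℤ × ℤ => ((e.2 - e.1 - 1) / (p : ℤ)).toNat)
      (s := S) (t := Finset.range ((k - 2) / p + 1)) ?_ ?_
    · simpa using this
    · -- maps to
      intro e he
      obtain ⟨h1, h2, h3⟩ := hmem e he
      simp only [Finset.mem_range]
      have hle : e.2 - e.1 - 1 ≤ (k : ℤ) - 2 := by omega
      have hcast : ((k - 2 : ℕ) : ℤ) = (k : ℤ) - 2 := by omega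
      have hdiv : (e.2 - e.1 - 1) / (p : ℤ) ≤ ((k - 2 : ℕ) : ℤ) / (p : ℤ) := by
        rw [hcast]; exact Int.ediv_le_ediv hp0 hle
      have h4 : (((k - 2) / p : ℕ) : ℤ) = ((k - 2 : ℕ) : ℤ) / (p : ℤ) := Int.natCast_ediv _ _
      rw [← h4] at hdiv
      have : ((e.2 - e.1 - 1) / (p : ℤ)).toNat ≤ (k - 2) / p := Int.toNat_le.mpr hdiv
      exact Finset.mem_coe.mpr (Finset.mem_range.mpr (by omega))
    · -- injective
      intro e1 he1 e2 he2 heq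
      by_contra hne
      have hc := hconf e1 he1 e2 he2 hne
      have h1 := hmem e1 he1
      have h2 := hmem e2 he2
      have hx : (0:ℤ) ≤ e1.2 - e1.1 - 1 := by omega
      have hy : (0:ℤ) ≤ e2.2 - e2.1 - 1 := by omega
      have hq1 : (0:ℤ) ≤ (e1.2 - e1.1 - 1) / (p : ℤ) := Int.ediv_nonneg hx (le_of_lt hp0)
      have hq2 : (0:ℤ) ≤ (e2.2 - e2.1 - 1) / (p : ℤ) := Int.ediv_nonneg hy (le_of_lt hp0)
      have heq' : (e1.2 - e1.1 - 1) / (p : ℤ) = (e2.2 - e2.1 - 1) / (p : ℤ) := by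
        have := congrArg (fun n : ℕ => (n : ℤ)) heq
        simpa [Int.toNat_of_nonneg hq1, Int.toNat_of_nonneg hq2] using this
      have := lemDiv p hp hx hy heq' rfl
      have habs : |(e1.2 - e1.1) - (e2.2 - e2.1)| < p := by
        have h' : (e1.2 - e1.1 - 1) - (e2.2 - e2.1 - 1) = (e1.2 - e1.1) - (e2.2 - e2.1) := by ring
        rwa [h'] at this
      omega
  have heq : (k + p - 2) / p = (k - 2) / p + 1 := by
    have h : k + p - 2 = (k - 2) + p := by omega
    rw [h, Nat.add_div_right _ hp]
  omega

lemma lemCover (p : ℕ) (D T : Finset ℤ)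
    (hcov : ∀ d ∈ D, ∃ a ∈ T, a ≤ d ∧ d < a + p) :
    D.card ≤ p * T.card := by
  classical
  have hsub : D ⊆ T.biUnion (fun a => Finset.Icc a (a + p - 1)) := by
    intro d hd
    obtain ⟨a, ha, h1, h2⟩ := hcov d hd
    exact Finset.mem_biUnion.mpr ⟨a, ha, Finset.mem_Icc.mpr ⟨h1, by omega⟩⟩
  calc D.card ≤ _ := Finset.card_le_card hsub
    _ ≤ ∑ a ∈ T, (Finset.Icc a (a + p - 1)).card := Finset.card_biUnion_le
    _ = ∑ a ∈ T, p := by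
        apply Finset.sum_congr rfl
        intro a _
        rw [Int.card_Icc]
        simp
    _ = p * T.card := by rw [Finset.sum_const, smul_eq_mul, mul_comm]


/-- For `p ≥ 1`, `k ≥ 2`: any finite ordered graph with chromatic number at least `k`
contains `⌈(k-1)/p⌉` edges whose lengths pairwise differ by at least `p`; and for the
complete graph on `{1,…,k}` this is the maximum size of such a set. -/
theorem stmt14 (p k : ℕ) (hp : 1 ≤ p) (hk : 2 ≤ k) :
    (∀ G : SimpleGraph ℤ, G.edgeSet.Finite → (k : ℕ∞) ≤ G.chromaticNumber →
      ∃ S : Finset (ℤ × ℤ), S.card = (k + p - 2) / p ∧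
        (∀ e ∈ S, e.1 < e.2 ∧ G.Adj e.1 e.2) ∧
        ∀ e1 ∈ S, ∀ e2 ∈ S, e1 ≠ e2 →
          (p : ℤ) ≤ |(e1.2 - e1.1) - (e2.2 - e2.1)|) ∧
    (∀ S : Finset (ℤ × ℤ),
      (∀ e ∈ S, 1 ≤ e.1 ∧ e.1 < e.2 ∧ e.2 ≤ (k : ℤ)) →
      (∀ e1 ∈ S, ∀ e2 ∈ S, e1 ≠ e2 →
        (p : ℤ) ≤ |(e1.2 - e1.1) - (e2.2 - e2.1)|) →
      S.card ≤ (k + p - 2) / p) := by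
  constructor
  · intro G hfin hchrom
    classical
    -- the ordered edges form a finite set
    have hA : {e : ℤ × ℤ | e.1 < e.2 ∧ G.Adj e.1 e.2}.Finite := by
      apply Set.Finite.of_finite_image (f := fun e : ℤ × ℤ => s(e.1, e.2))
      · apply hfin.subset
        rintro x ⟨e, ⟨_, hadj⟩, rfl⟩
        exact hadj
      · rintro e1 ⟨hlt1, _⟩ e2 ⟨hlt2, _⟩ heq
        simp only [Sym2.eq, Sym2.rel_iff', Prod.mk.injEq, Prod.swap_prod_mk] at heq
        rcases heq with ⟨h1, h2⟩ | ⟨h1, h2⟩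
        · exact Prod.ext h1 h2
        · exfalso; omega
    set E : Finset (ℤ × ℤ) := hA.toFinset with hEdef
    have hE : ∀ e : ℤ × ℤ, e ∈ E ↔ e.1 < e.2 ∧ G.Adj e.1 e.2 := fun e => hA.mem_toFinset
    set D : Finset ℤ := E.image (fun e => e.2 - e.1) with hDdef
    set m : ℕ := (k + p - 2) / p with hmdef
    obtain ⟨T, hTsub, hTsep, hTcov⟩ := lemB p hp D.card D le_rfl
    by_cases hbig : m ≤ T.card
    · -- we can pick m pairwise conflicting edges
      obtain ⟨T₀, hT₀sub, hT₀card⟩ := Finset.exists_subset_card_eq hbig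
      set f : ℤ → ℤ × ℤ := fun l =>
        if h : ∃ e ∈ E, e.2 - e.1 = l then h.choose else ((0 : ℤ), (1 : ℤ)) with hfdef
      have hf : ∀ l ∈ T₀, f l ∈ E ∧ (f l).2 - (f l).1 = l := by
        intro l hl
        have hlD : l ∈ D := hTsub (hT₀sub hl)
        obtain ⟨e, he, hlen⟩ := Finset.mem_image.mp hlD
        have hex : ∃ e ∈ E, e.2 - e.1 = l := ⟨e, he, hlen⟩
        simp only [hfdef, dif_pos hex]
        exact ⟨hex.choose_spec.1, hex.choose_spec.2⟩
      refine ⟨T₀.image f, ?_, ?_, ?_⟩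
      · rw [Finset.card_image_of_injOn, hT₀card]
        intro l1 h1 l2 h2 heq
        have e1 := (hf l1 h1).2
        have e2 := (hf l2 h2).2
        rw [← e1, ← e2, heq]
      · intro e he
        obtain ⟨l, hl, rfl⟩ := Finset.mem_image.mp he
        exact (hE _).mp (hf l hl).1
      · intro e1 he1 e2 he2 hne
        obtain ⟨l1, hl1, rfl⟩ := Finset.mem_image.mp he1
        obtain ⟨l2, hl2, rfl⟩ := Finset.mem_image.mp he2
        have hlne : l1 ≠ l2 := by rintro rfl; exact hne rfl
        have := hTsep l1 (hT₀sub hl1) l2 (hT₀sub hl2) hlne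
        rw [(hf l1 hl1).2, (hf l2 hl2).2]
        exact this
    · -- otherwise we can properly color G with k-1 colors, contradiction
      exfalso
      push_neg at hbig
      have hm1 : 1 ≤ m := Nat.div_pos (by omega) (by omega)
      have hDT : D.card ≤ p * T.card := lemCover p D T hTcov
      have hpm : p * m ≤ k + p - 2 := by
        rw [hmdef, mul_comm]; exact Nat.div_mul_le_self _ _
      have h2 : p * (m - 1) + p = p * m := by
        obtain ⟨c, hc⟩ := Nat.exists_eq_add_of_le hm1
        rw [hc, Nat.add_sub_cancel_left]; ring
      have hDx : D.card ≤ p * (m - 1) :=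
        le_trans hDT (Nat.mul_le_mul_left p (by omega : T.card ≤ m - 1))
      have h3 : p * (m - 1) + p ≤ k + p - 2 := by rw [h2]; exact hpm
      have hDk : D.card ≤ k - 2 := by
        obtain ⟨x, hx⟩ : ∃ x, x = p * (m - 1) := ⟨_, rfl⟩
        rw [← hx] at hDx h3
        omega
      -- greedy coloring
      set V : Finset ℤ := E.image Prod.fst ∪ E.image Prod.snd with hVdef
      have hsupp : ∀ u v : ℤ, G.Adj u v → u ∈ V ∧ v ∈ V := by
        intro u v huv
        rcases lt_trichotomy u v with hlt | heq | hgt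
        · have hmem : (u, v) ∈ E := (hE _).mpr ⟨hlt, huv⟩
          exact ⟨Finset.mem_union_left _ (Finset.mem_image.mpr ⟨(u, v), hmem, rfl⟩),
                 Finset.mem_union_right _ (Finset.mem_image.mpr ⟨(u, v), hmem, rfl⟩)⟩
        · exact absurd (heq ▸ huv) (G.loopless.irrefl u)
        · have hmem : (v, u) ∈ E := (hE _).mpr ⟨hgt, huv.symm⟩
          exact ⟨Finset.mem_union_right _ (Finset.mem_image.mpr ⟨(v, u), hmem, rfl⟩),
                 Finset.mem_union_left _ (Finset.mem_image.mpr ⟨(v, u), hmem, rfl⟩)⟩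
      have hdeg : ∀ (v : ℤ) (W : Finset ℤ),
          (∀ u ∈ W, u ∈ V ∧ u < v ∧ G.Adj u v) → W.card ≤ D.card := by
        intro v W hW
        apply Finset.card_le_card_of_injOn (fun u => v - u)
        · intro u hu
          obtain ⟨_, hlt, hadj⟩ := hW u hu
          exact Finset.mem_image.mpr ⟨(u, v), (hE _).mpr ⟨hlt, hadj⟩, rfl⟩
        · intro u1 _ u2 _ heq
          have h' : v - u1 = v - u2 := heq
          omega
      have hcol : G.Colorable (D.card + 1) := lemA D.card V.card G V le_rfl hsupp hdeg
      have hcol' : G.Colorable (k - 1) := hcol.mono (by omega)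
      have hle : G.chromaticNumber ≤ ((k - 1 : ℕ) : ℕ∞) := hcol'.chromaticNumber_le
      have : (k : ℕ∞) ≤ ((k - 1 : ℕ) : ℕ∞) := le_trans hchrom hle
      have : k ≤ k - 1 := by exact_mod_cast this
      omega
  · intro S hmem hconf
    exact lemPart2 p k hp hk S hmem hconf
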